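/- There do not exist a vector φ ∈ (ℂ^2)^{⊗3} and linear maps A_i, B_i, C_i : ℂ^2 → ℂ^2 (i = 1,2) together with nonzero scalars λ_1, λ_2 such that (A_1 ⊗ B_1 ⊗ C_1)φ = λ_1 |GHZ⟩ and (A_2 ⊗ B_2 ⊗ C_2)φ = λ_2 |W⟩, where |GHZ⟩ = (1/√2)(|000⟩+|111⟩) and |W⟩ = (1/√3)(|100⟩+|010⟩+|001⟩). -/

import Mathlib

open scoped BigOperators

/-- Standard basis vector `|i⟩` of `ℂ^2`. -/
noncomputable def eVec (i : Fin 2) : Fin 2 → ℂ := fun j => if j = i then 1 else 0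

/-- Product vector `a ⊗ b ⊗ c` in `(ℂ^2)^{⊗3}`. -/
noncomputable def tens2 (a b c : Fin 2 → ℂ) : Fin 2 × Fin 2 × Fin 2 → ℂ :=
  fun p => a p.1 * b p.2.1 * c p.2.2

/-- `|GHZ⟩ = (1/√2)(|000⟩ + |111⟩)`. -/
noncomputable def GHZVec : Fin 2 × Fin 2 × Fin 2 → ℂ :=
  ((Real.sqrt 2 : ℂ))⁻¹ •
    (tens2 (eVec 0) (eVec 0) (eVec 0) + tens2 (eVec 1) (eVec 1) (eVec 1))

/-- `|W⟩ = (1/√3)(|100⟩ + |010⟩ + |001⟩)`. -/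
noncomputable def WVec : Fin 2 × Fin 2 × Fin 2 → ℂ :=
  ((Real.sqrt 3 : ℂ))⁻¹ •
    (tens2 (eVec 1) (eVec 0) (eVec 0) + tens2 (eVec 0) (eVec 1) (eVec 0) +
      tens2 (eVec 0) (eVec 0) (eVec 1))

/-- The action of `A ⊗ B ⊗ C` on `(ℂ^2)^{⊗3}`. -/
noncomputable def applyLoc (A B C : Matrix (Fin 2) (Fin 2) ℂ)
    (v : Fin 2 × Fin 2 × Fin 2 → ℂ) : Fin 2 × Fin 2 × Fin 2 → ℂ :=
  fun p => ∑ q : Fin 2 × Fin 2 × Fin 2,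
    A p.1 q.1 * B p.2.1 q.2.1 * C p.2.2 q.2.2 * v q

/-! ### Auxiliary machinery: the 2×2×2 hyperdeterminant via the pencil of slices. -/

/-- `det` of the slice `t(0,·,·)`. -/
noncomputable def quadA (t : Fin 2 × Fin 2 × Fin 2 → ℂ) : ℂ :=
  t (0,0,0) * t (0,1,1) - t (0,0,1) * t (0,1,0)

/-- `det` of the slice `t(1,·,·)`. -/
noncomputable def quadC (t : Fin 2 × Fin 2 × Fin 2 → ℂ) : ℂ :=
  t (1,0,0) * t (1,1,1) - t (1,0,1) * t (1,1,0)

/-- Mixed coefficient of the binary quadratic `det(x·t(0,·,·) + y·t(1,·,·))`. -/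
noncomputable def quadB (t : Fin 2 × Fin 2 × Fin 2 → ℂ) : ℂ :=
  t (0,0,0) * t (1,1,1) + t (1,0,0) * t (0,1,1) - t (0,0,1) * t (1,1,0) - t (1,0,1) * t (0,1,0)

/-- The Cayley hyperdeterminant: the discriminant of that binary quadratic. -/
noncomputable def hDet (t : Fin 2 × Fin 2 × Fin 2 → ℂ) : ℂ :=
  quadB t ^ 2 - 4 * quadA t * quadC t

lemma quadA_apply (A B C : Matrix (Fin 2) (Fin 2) ℂ) (φ : Fin 2 × Fin 2 × Fin 2 → ℂ) :
    quadA (applyLoc A B C φ) =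
      B.det * C.det *
        (quadA φ * A 0 0 ^ 2 + quadB φ * (A 0 0 * A 0 1) + quadC φ * A 0 1 ^ 2) := by
  simp only [quadA, quadB, quadC, applyLoc, Fintype.sum_prod_type, Fin.sum_univ_two,
    Matrix.det_fin_two]
  ring

lemma quadC_apply (A B C : Matrix (Fin 2) (Fin 2) ℂ) (φ : Fin 2 × Fin 2 × Fin 2 → ℂ) :
    quadC (applyLoc A B C φ) =
      B.det * C.det *
        (quadA φ * A 1 0 ^ 2 + quadB φ * (A 1 0 * A 1 1) + quadC φ * A 1 1 ^ 2) := by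
  simp only [quadA, quadB, quadC, applyLoc, Fintype.sum_prod_type, Fin.sum_univ_two,
    Matrix.det_fin_two]
  ring

lemma quadB_apply (A B C : Matrix (Fin 2) (Fin 2) ℂ) (φ : Fin 2 × Fin 2 × Fin 2 → ℂ) :
    quadB (applyLoc A B C φ) =
      B.det * C.det *
        (2 * quadA φ * (A 0 0 * A 1 0) + quadB φ * (A 0 0 * A 1 1 + A 0 1 * A 1 0) +
          2 * quadC φ * (A 0 1 * A 1 1)) := by
  simp only [quadA, quadB, quadC, applyLoc, Fintype.sum_prod_type, Fin.sum_univ_two,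
    Matrix.det_fin_two]
  ring

/-- Multiplicativity of the hyperdeterminant under local maps. -/
lemma hDet_apply (A B C : Matrix (Fin 2) (Fin 2) ℂ) (φ : Fin 2 × Fin 2 × Fin 2 → ℂ) :
    hDet (applyLoc A B C φ) = (A.det * B.det * C.det) ^ 2 * hDet φ := by
  simp only [hDet, quadA_apply, quadB_apply, quadC_apply, Matrix.det_fin_two]
  ring

/-- If the first local factor is singular, all 2×2 minors of the first flattening
of the image vanish. -/
lemma minorA (A B C : Matrix (Fin 2) (Fin 2) ℂ) (φ : Fin 2 × Fin 2 × Fin 2 → ℂ)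
    (hA : A.det = 0) (j k j' k' : Fin 2) :
    applyLoc A B C φ (0,j,k) * applyLoc A B C φ (1,j',k')
      = applyLoc A B C φ (0,j',k') * applyLoc A B C φ (1,j,k) := by
  rw [Matrix.det_fin_two] at hA
  simp only [applyLoc, Fintype.sum_prod_type, Fin.sum_univ_two]
  linear_combination
    ((B j 0 * C k 0 * φ (0,0,0) + B j 0 * C k 1 * φ (0,0,1) +
      B j 1 * C k 0 * φ (0,1,0) + B j 1 * C k 1 * φ (0,1,1)) *
     (B j' 0 * C k' 0 * φ (1,0,0) + B j' 0 * C k' 1 * φ (1,0,1) +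
      B j' 1 * C k' 0 * φ (1,1,0) + B j' 1 * C k' 1 * φ (1,1,1)) -
     (B j 0 * C k 0 * φ (1,0,0) + B j 0 * C k 1 * φ (1,0,1) +
      B j 1 * C k 0 * φ (1,1,0) + B j 1 * C k 1 * φ (1,1,1)) *
     (B j' 0 * C k' 0 * φ (0,0,0) + B j' 0 * C k' 1 * φ (0,0,1) +
      B j' 1 * C k' 0 * φ (0,1,0) + B j' 1 * C k' 1 * φ (0,1,1))) * hA

lemma minorB (A B C : Matrix (Fin 2) (Fin 2) ℂ) (φ : Fin 2 × Fin 2 × Fin 2 → ℂ)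
    (hB : B.det = 0) (i k i' k' : Fin 2) :
    applyLoc A B C φ (i,0,k) * applyLoc A B C φ (i',1,k')
      = applyLoc A B C φ (i',0,k') * applyLoc A B C φ (i,1,k) := by
  rw [Matrix.det_fin_two] at hB
  simp only [applyLoc, Fintype.sum_prod_type, Fin.sum_univ_two]
  linear_combination
    ((A i 0 * C k 0 * φ (0,0,0) + A i 0 * C k 1 * φ (0,0,1) +
      A i 1 * C k 0 * φ (1,0,0) + A i 1 * C k 1 * φ (1,0,1)) *
     (A i' 0 * C k' 0 * φ (0,1,0) + A i' 0 * C k' 1 * φ (0,1,1) +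
      A i' 1 * C k' 0 * φ (1,1,0) + A i' 1 * C k' 1 * φ (1,1,1)) -
     (A i 0 * C k 0 * φ (0,1,0) + A i 0 * C k 1 * φ (0,1,1) +
      A i 1 * C k 0 * φ (1,1,0) + A i 1 * C k 1 * φ (1,1,1)) *
     (A i' 0 * C k' 0 * φ (0,0,0) + A i' 0 * C k' 1 * φ (0,0,1) +
      A i' 1 * C k' 0 * φ (1,0,0) + A i' 1 * C k' 1 * φ (1,0,1))) * hB

lemma minorC (A B C : Matrix (Fin 2) (Fin 2) ℂ) (φ : Fin 2 × Fin 2 × Fin 2 → ℂ)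
    (hC : C.det = 0) (i j i' j' : Fin 2) :
    applyLoc A B C φ (i,j,0) * applyLoc A B C φ (i',j',1)
      = applyLoc A B C φ (i',j',0) * applyLoc A B C φ (i,j,1) := by
  rw [Matrix.det_fin_two] at hC
  simp only [applyLoc, Fintype.sum_prod_type, Fin.sum_univ_two]
  linear_combination
    ((A i 0 * B j 0 * φ (0,0,0) + A i 0 * B j 1 * φ (0,1,0) +
      A i 1 * B j 0 * φ (1,0,0) + A i 1 * B j 1 * φ (1,1,0)) *
     (A i' 0 * B j' 0 * φ (0,0,1) + A i' 0 * B j' 1 * φ (0,1,1) +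
      A i' 1 * B j' 0 * φ (1,0,1) + A i' 1 * B j' 1 * φ (1,1,1)) -
     (A i 0 * B j 0 * φ (0,0,1) + A i 0 * B j 1 * φ (0,1,1) +
      A i 1 * B j 0 * φ (1,0,1) + A i 1 * B j 1 * φ (1,1,1)) *
     (A i' 0 * B j' 0 * φ (0,0,0) + A i' 0 * B j' 1 * φ (0,1,0) +
      A i' 1 * B j' 0 * φ (1,0,0) + A i' 1 * B j' 1 * φ (1,1,0))) * hC

lemma sqrt2inv_ne : ((Real.sqrt 2 : ℂ))⁻¹ ≠ 0 := by
  simp [Complex.ofReal_ne_zero, Real.sqrt_eq_zero']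

lemma sqrt3inv_ne : ((Real.sqrt 3 : ℂ))⁻¹ ≠ 0 := by
  simp [Complex.ofReal_ne_zero, Real.sqrt_eq_zero']

lemma hDet_GHZ (l : ℂ) (hl : l ≠ 0) : hDet (l • GHZVec) ≠ 0 := by
  have h : hDet (l • GHZVec) = (l * ((Real.sqrt 2 : ℂ))⁻¹) ^ 4 := by
    simp [hDet, quadA, quadB, quadC, GHZVec, tens2, eVec, Pi.smul_apply, smul_eq_mul]
    ring
  rw [h]
  exact pow_ne_zero _ (mul_ne_zero hl sqrt2inv_ne)

lemma hDet_W (l : ℂ) : hDet (l • WVec) = 0 := by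
  simp [hDet, quadA, quadB, quadC, WVec, tens2, eVec, Pi.smul_apply, smul_eq_mul]

lemma W001 (l : ℂ) : (l • WVec) (0,0,1) = l * ((Real.sqrt 3 : ℂ))⁻¹ := by
  simp [WVec, tens2, eVec, Pi.smul_apply, smul_eq_mul]
lemma W100 (l : ℂ) : (l • WVec) (1,0,0) = l * ((Real.sqrt 3 : ℂ))⁻¹ := by
  simp [WVec, tens2, eVec, Pi.smul_apply, smul_eq_mul]
lemma W010 (l : ℂ) : (l • WVec) (0,1,0) = l * ((Real.sqrt 3 : ℂ))⁻¹ := by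
  simp [WVec, tens2, eVec, Pi.smul_apply, smul_eq_mul]
lemma W000 (l : ℂ) : (l • WVec) (0,0,0) = 0 := by
  simp [WVec, tens2, eVec, Pi.smul_apply, smul_eq_mul]
lemma W101 (l : ℂ) : (l • WVec) (1,0,1) = 0 := by
  simp [WVec, tens2, eVec, Pi.smul_apply, smul_eq_mul]
lemma W110 (l : ℂ) : (l • WVec) (1,1,0) = 0 := by
  simp [WVec, tens2, eVec, Pi.smul_apply, smul_eq_mul]

/-- No single three-qubit vector can be mapped by local linear maps onto a
nonzero multiple of `|GHZ⟩` and also onto a nonzero multiple of `|W⟩`. -/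
theorem stmt9 :
    ¬ ∃ (φ : Fin 2 × Fin 2 × Fin 2 → ℂ)
        (A₁ B₁ C₁ A₂ B₂ C₂ : Matrix (Fin 2) (Fin 2) ℂ) (l₁ l₂ : ℂ),
      l₁ ≠ 0 ∧ l₂ ≠ 0 ∧
        applyLoc A₁ B₁ C₁ φ = l₁ • GHZVec ∧ applyLoc A₂ B₂ C₂ φ = l₂ • WVec := by
  rintro ⟨φ, A₁, B₁, C₁, A₂, B₂, C₂, l₁, l₂, h₁, h₂, e₁, e₂⟩
  have hl₂s : l₂ * ((Real.sqrt 3 : ℂ))⁻¹ ≠ 0 := mul_ne_zero h₂ sqrt3inv_ne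
  -- from the GHZ equation, `hDet φ ≠ 0`
  have d₁ := hDet_apply A₁ B₁ C₁ φ
  rw [e₁] at d₁
  have hφ : hDet φ ≠ 0 := by
    intro h
    rw [h, mul_zero] at d₁
    exact hDet_GHZ l₁ h₁ d₁
  -- from the W equation, some local factor on the W side is singular
  have d₂ := hDet_apply A₂ B₂ C₂ φ
  rw [e₂, hDet_W] at d₂
  have hdet : A₂.det * B₂.det * C₂.det = 0 := by
    by_contra h
    exact hφ (by
      have := (pow_ne_zero 2 h)
      field_simp at d₂
      rw [mul_pow, mul_pow] at this
      exact (mul_eq_zero.mp d₂.symm).resolve_left this)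
  -- but a singular factor kills a 2×2 minor of a flattening of `l₂ • W`,
  -- which is nonzero: contradiction.
  rcases mul_eq_zero.mp hdet with h | hC
  · rcases mul_eq_zero.mp h with hA | hB
    · have m := minorA A₂ B₂ C₂ φ hA 0 1 0 0
      rw [e₂, W001, W100, W000, W101] at m
      exact hl₂s (mul_self_eq_zero.mp (by simpa using m))
    · have m := minorB A₂ B₂ C₂ φ hB 1 0 0 0
      rw [e₂, W100, W010, W000, W110] at m
      exact hl₂s (mul_self_eq_zero.mp (by simpa using m))
  · have m := minorC A₂ B₂ C₂ φ hC 1 0 0 0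
    rw [e₂, W100, W001, W000, W101] at m
    exact hl₂s (mul_self_eq_zero.mp (by simpa using m))
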